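/- arXiv:nlin/0201018 — 2 statements merged into one kernel-verified Lean document; each statement's English description precedes it below -/
import Mathlib

section
/- With l(t) = ω_L t and g(t) = ω_G t where ω_L(L,G) = (G+L)/((−G+√((G+L)²−2b))³ √((G+L)²−2b)) and ω_G(L,G) = (G+L−√((G+L)²−2b))/((−G+√((G+L)²−2b))³ √((G+L)²−2b)), the functional determinant D = det [[∂l/∂L, ∂l/∂G],[∂g/∂L, ∂g/∂G]] evaluated at time t = τ/2 equals D = 6b(τ/2)²/((−G+√((G+L)²−2b))⁷((G+L)²−2b)^{3/2}), which is nonzero whenever b > 0, τ > 0, (G+L)² > 2b, and −G + √((G+L)²−2b) > 0. -/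
/-- The Manev frequency `ω_L(L,G)`. -/
noncomputable def omegaL (b L G : ℝ) : ℝ :=
  (G + L) / ((-G + Real.sqrt ((G + L) ^ 2 - 2 * b)) ^ 3
    * Real.sqrt ((G + L) ^ 2 - 2 * b))

/-- The Manev frequency `ω_G(L,G)`. -/
noncomputable def omegaG (b L G : ℝ) : ℝ :=
  (G + L - Real.sqrt ((G + L) ^ 2 - 2 * b))
    / ((-G + Real.sqrt ((G + L) ^ 2 - 2 * b)) ^ 3
      * Real.sqrt ((G + L) ^ 2 - 2 * b))

/-- The functional determinant of `(l,g) = ((τ/2)·ω_L, (τ/2)·ω_G)` with respect to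
`(L,G)` equals `6b(τ/2)²/((−G+√((G+L)²−2b))⁷ ((G+L)²−2b)^{3/2})` and is nonzero. -/
theorem manev_functional_determinant (b L G τ : ℝ) (hb : 0 < b) (hτ : 0 < τ)
    (h1 : (G + L) ^ 2 > 2 * b) (hGL : 0 < G + L)
    (h2 : 0 < -G + Real.sqrt ((G + L) ^ 2 - 2 * b))
    (a11 a12 a21 a22 : ℝ)
    (h11 : HasDerivAt (fun L' => (τ / 2) * omegaL b L' G) a11 L)
    (h12 : HasDerivAt (fun G' => (τ / 2) * omegaL b L G') a12 G)
    (h21 : HasDerivAt (fun L' => (τ / 2) * omegaG b L' G) a21 L)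
    (h22 : HasDerivAt (fun G' => (τ / 2) * omegaG b L G') a22 G) :
    a11 * a22 - a12 * a21
      = 6 * b * (τ / 2) ^ 2
        / ((-G + Real.sqrt ((G + L) ^ 2 - 2 * b)) ^ 7
          * ((G + L) ^ 2 - 2 * b) ^ ((3 : ℝ) / 2)) ∧
    a11 * a22 - a12 * a21 ≠ 0 := by
  have hx : (0:ℝ) < (G + L) ^ 2 - 2 * b := by linarith
  set s : ℝ := Real.sqrt ((G + L) ^ 2 - 2 * b) with hsdef
  have hs : 0 < s := Real.sqrt_pos.mpr hx
  have hs2 : s ^ 2 = (G + L) ^ 2 - 2 * b := Real.sq_sqrt hx.le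
  have hsne : s ≠ 0 := ne_of_gt hs
  have hune : (-G + s) ≠ 0 := ne_of_gt h2
  have hdenne : (-G + s) ^ 3 * s ≠ 0 := mul_ne_zero (pow_ne_zero 3 hune) hsne
  -- derivatives with respect to L
  have hinnerL : HasDerivAt (fun L' : ℝ => (G + L') ^ 2 - 2 * b) (2 * (G + L)) L := by
    have h := (((hasDerivAt_id L).const_add G).pow 2).sub_const (2 * b)
    refine h.congr_deriv ?_
    simp
  have hsqrtL : HasDerivAt (fun L' : ℝ => Real.sqrt ((G + L') ^ 2 - 2 * b)) ((G + L) / s) L := by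
    have h := (Real.hasDerivAt_sqrt (ne_of_gt hx)).comp L hinnerL
    refine h.congr_deriv ?_
    rw [← hsdef]
    field_simp
  have huL : HasDerivAt (fun L' : ℝ => -G + Real.sqrt ((G + L') ^ 2 - 2 * b)) ((G + L) / s) L :=
    hsqrtL.const_add (-G)
  have hdenL : HasDerivAt
      (fun L' : ℝ => (-G + Real.sqrt ((G + L') ^ 2 - 2 * b)) ^ 3 * Real.sqrt ((G + L') ^ 2 - 2 * b))
      ((3 : ℕ) * (-G + s) ^ 2 * ((G + L) / s) * s + (-G + s) ^ 3 * ((G + L) / s)) L := by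
    have h := (huL.pow 3).mul hsqrtL
    refine h.congr_deriv ?_
    rw [← hsdef]
    simp
    exact Or.inl rfl
  have hnumL : HasDerivAt (fun L' : ℝ => G + L') 1 L := (hasDerivAt_id L).const_add G
  have hwLL : HasDerivAt (fun L' => (τ / 2) * omegaL b L' G)
      ((τ / 2) * ((1 * ((-G + s) ^ 3 * s) - (G + L) *
        ((3 : ℕ) * (-G + s) ^ 2 * ((G + L) / s) * s + (-G + s) ^ 3 * ((G + L) / s)))
        / ((-G + s) ^ 3 * s) ^ 2)) L := by
    simp only [omegaL]
    exact (hnumL.div hdenL hdenne).const_mul (τ / 2)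
  have hnumGL : HasDerivAt (fun L' : ℝ => G + L' - Real.sqrt ((G + L') ^ 2 - 2 * b))
      (1 - (G + L) / s) L := hnumL.sub hsqrtL
  have hwGL : HasDerivAt (fun L' => (τ / 2) * omegaG b L' G)
      ((τ / 2) * (((1 - (G + L) / s) * ((-G + s) ^ 3 * s) - (G + L - s) *
        ((3 : ℕ) * (-G + s) ^ 2 * ((G + L) / s) * s + (-G + s) ^ 3 * ((G + L) / s)))
        / ((-G + s) ^ 3 * s) ^ 2)) L := by
    simp only [omegaG]
    exact (hnumGL.div hdenL hdenne).const_mul (τ / 2)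
  -- derivatives with respect to G
  have hinnerG : HasDerivAt (fun G' : ℝ => (G' + L) ^ 2 - 2 * b) (2 * (G + L)) G := by
    have h := (((hasDerivAt_id G).add_const L).pow 2).sub_const (2 * b)
    refine h.congr_deriv ?_
    simp
  have hxG : (G + L) ^ 2 - 2 * b = (G + L) ^ 2 - 2 * b := rfl
  have hsqrtG : HasDerivAt (fun G' : ℝ => Real.sqrt ((G' + L) ^ 2 - 2 * b)) ((G + L) / s) G := by
    have hne : (G + L) ^ 2 - 2 * b ≠ 0 := ne_of_gt hx
    have h := (Real.hasDerivAt_sqrt hne).comp G hinnerG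
    refine h.congr_deriv ?_
    rw [← hsdef]
    field_simp
  have huG : HasDerivAt (fun G' : ℝ => -G' + Real.sqrt ((G' + L) ^ 2 - 2 * b))
      (-1 + (G + L) / s) G := by
    have h := ((hasDerivAt_id G).neg).add hsqrtG
    exact h
  have hdenG : HasDerivAt
      (fun G' : ℝ => (-G' + Real.sqrt ((G' + L) ^ 2 - 2 * b)) ^ 3 * Real.sqrt ((G' + L) ^ 2 - 2 * b))
      ((3 : ℕ) * (-G + s) ^ 2 * (-1 + (G + L) / s) * s + (-G + s) ^ 3 * ((G + L) / s)) G := by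
    have h := (huG.pow 3).mul hsqrtG
    refine h.congr_deriv ?_
    rw [← hsdef]
    simp
    exact Or.inl rfl
  have hnumG : HasDerivAt (fun G' : ℝ => G' + L) 1 G := (hasDerivAt_id G).add_const L
  have hwLG : HasDerivAt (fun G' => (τ / 2) * omegaL b L G')
      ((τ / 2) * ((1 * ((-G + s) ^ 3 * s) - (G + L) *
        ((3 : ℕ) * (-G + s) ^ 2 * (-1 + (G + L) / s) * s + (-G + s) ^ 3 * ((G + L) / s)))
        / ((-G + s) ^ 3 * s) ^ 2)) G := by
    simp only [omegaL]
    exact (hnumG.div hdenG hdenne).const_mul (τ / 2)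
  have hnumGG : HasDerivAt (fun G' : ℝ => G' + L - Real.sqrt ((G' + L) ^ 2 - 2 * b))
      (1 - (G + L) / s) G := hnumG.sub hsqrtG
  have hwGG : HasDerivAt (fun G' => (τ / 2) * omegaG b L G')
      ((τ / 2) * (((1 - (G + L) / s) * ((-G + s) ^ 3 * s) - (G + L - s) *
        ((3 : ℕ) * (-G + s) ^ 2 * (-1 + (G + L) / s) * s + (-G + s) ^ 3 * ((G + L) / s)))
        / ((-G + s) ^ 3 * s) ^ 2)) G := by
    simp only [omegaG]
    exact (hnumGG.div hdenG hdenne).const_mul (τ / 2)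
  have ea11 := h11.unique hwLL
  have ea12 := h12.unique hwLG
  have ea21 := h21.unique hwGL
  have ea22 := h22.unique hwGG
  have h32 : ((G + L) ^ 2 - 2 * b) ^ ((3 : ℝ) / 2) = s ^ 3 := by
    rw [← hs2, ← Real.rpow_natCast s 2, ← Real.rpow_mul hs.le]
    norm_num
  have hb' : b = ((G + L) ^ 2 - s ^ 2) / 2 := by linarith [hs2]
  have key : a11 * a22 - a12 * a21 = 6 * b * (τ / 2) ^ 2 / ((-G + s) ^ 7 * s ^ 3) := by
    rw [ea11, ea12, ea21, ea22, hb']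
    field_simp
    ring
  refine ⟨?_, ?_⟩
  · rw [h32]
    exact key
  · rw [key]
    have hpos : 0 < 6 * b * (τ / 2) ^ 2 / ((-G + s) ^ 7 * s ^ 3) := by
      apply div_pos (by positivity) (mul_pos (pow_pos h2 7) (pow_pos hs 3))
    exact ne_of_gt hpos
end

section
/- The 4×4 matrix A = [[0, ω, 1, 0], [−ω, 0, 0, 1], [2ω² + 2b/a⁴, 0, 0, ω], [0, −ω², −ω, 0]], where ω, a, b > 0 satisfy ω²a⁴ = a + 2b, has eigenvalues 0 (with algebraic multiplicity two), i/a^{3/2}, and −i/a^{3/2}. -/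
open Matrix Polynomial

set_option maxHeartbeats 1000000 in
/-- The linearization matrix `A` around a circular Manev orbit, with
`ω²a⁴ = a + 2b`, has eigenvalues `0` (algebraic multiplicity two) and
`± i/a^{3/2}`: over ℂ its characteristic polynomial factors as
`X² (X − i/a^{3/2}) (X + i/a^{3/2})` (equivalently `X²(X² + 1/a³)`). -/
theorem linearization_eigenvalues (a b ω : ℝ) (ha : 0 < a) (hb : 0 < b)
    (hω : 0 < ω) (hrel : ω ^ 2 * a ^ 4 = a + 2 * b) :
    let A : Matrix (Fin 4) (Fin 4) ℂ :=
      !![0, ω, 1, 0;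
         -ω, 0, 0, 1;
         2 * ω ^ 2 + 2 * b / a ^ 4, 0, 0, ω;
         0, -(ω ^ 2 : ℂ), -ω, 0]
    A.charpoly
      = X ^ 2 * (X - C (Complex.I / (a : ℂ) ^ ((3 : ℂ) / 2)))
          * (X + C (Complex.I / (a : ℂ) ^ ((3 : ℂ) / 2))) := by
  intro A
  have ha' : (a:ℂ) ≠ 0 := by exact_mod_cast ha.ne'
  have hrelC : (ω:ℂ) ^ 2 * (a:ℂ) ^ 4 = (a:ℂ) + 2 * (b:ℂ) := by exact_mod_cast hrel
  have he : (2 * (ω:ℂ) ^ 2 + 2 * (b:ℂ) / (a:ℂ) ^ 4) = 3 * (ω:ℂ)^2 - 1/(a:ℂ)^3 := by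
    field_simp
    linear_combination (-1:ℂ) * hrelC
  set c : ℂ := 3 * (ω:ℂ)^2 - 1/(a:ℂ)^3 with hc
  have hM : A.charmatrix =
      !![X, -C (ω:ℂ), -1, 0;
         C (ω:ℂ), X, 0, -1;
         -C c, 0, X, -C (ω:ℂ);
         0, C ((ω:ℂ)^2), C (ω:ℂ), X] := by
    ext i j
    fin_cases i <;> fin_cases j <;>
      simp [A, charmatrix_apply, Matrix.one_apply, he]
  have key : A.charpoly = X^4 + C (1/(a:ℂ)^3) * X^2 := by
    rw [Matrix.charpoly, hM]
    simp [Matrix.det_succ_row_zero, Fin.sum_univ_succ, Fin.succAbove]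
    ring_nf
    simp only [hc, map_sub, _root_.map_mul, map_pow, map_ofNat, one_div, ← inv_pow]
    ring
  have h0 : (a:ℂ) ^ ((3:ℂ)/2) = ((a ^ ((3:ℝ)/2) : ℝ) : ℂ) := by
    rw [Complex.ofReal_cpow ha.le]; norm_num
  have hr : (a ^ ((3:ℝ)/2))^2 = a^3 := by
    rw [← Real.rpow_natCast (a ^ ((3:ℝ)/2)) 2, ← Real.rpow_mul ha.le]
    norm_num
  have h1 : ((a:ℂ)^((3:ℂ)/2))^2 = (a:ℂ)^3 := by
    rw [h0]; exact_mod_cast hr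
  have hI : (C (Complex.I / (a:ℂ)^((3:ℂ)/2)))^2 = -C (1/(a:ℂ)^3) := by
    rw [← map_pow, ← map_neg]
    congr 1
    rw [div_pow, Complex.I_sq, h1]
    ring
  rw [key]
  linear_combination (X^2 : Polynomial ℂ) * hI
end
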